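/- Let A be a positive bounded operator on a complex Hilbert space H. Then for all x, y ∈ H, |⟨Ax,y⟩| ≤ (‖A‖/2)(|⟨x,y⟩| + ‖x‖‖y‖). -/

import Mathlib

open scoped InnerProductSpace

theorem positive_buzano {H : Type*} [NormedAddCommGroup H]
    [InnerProductSpace ℂ H] [CompleteSpace H] (A : H →L[ℂ] H)
    (hA : A.IsPositive) (x y : H) :
    ‖⟪A x, y⟫_ℂ‖ ≤ (‖A‖ / 2) * (‖⟪x, y⟫_ℂ‖ + ‖x‖ * ‖y‖) := by
  set c : ℝ := ‖A‖ / 2 with hc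
  have hc0 : (0 : ℝ) ≤ c := by positivity
  have hA0 : (0 : H →L[ℂ] H) ≤ A := (ContinuousLinearMap.nonneg_iff_isPositive A).mpr hA
  have hAsa : IsSelfAdjoint A := hA.isSelfAdjoint
  set T : H →L[ℂ] H := A - algebraMap ℝ (H →L[ℂ] H) c with hT
  have hTnorm : ‖T‖ ≤ c := by
    have : T = cfc (fun t : ℝ => t - c) A := by
      rw [cfc_sub (fun t : ℝ => t) (fun _ : ℝ => c) A, cfc_id' (R := ℝ) A, cfc_const c A]
    rw [this]
    refine norm_cfc_le hc0 fun t ht => ?_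
    have h1 : 0 ≤ t := spectrum_nonneg_of_nonneg hA0 ht
    have h2 : t ≤ ‖A‖ := (Real.le_norm_self t).trans (by
      calc ‖t‖ ≤ ‖A‖ * ‖(1 : H →L[ℂ] H)‖ := spectrum.norm_le_norm_mul_of_mem ht
        _ ≤ ‖A‖ * 1 := by gcongr; exact ContinuousLinearMap.norm_id_le
        _ = ‖A‖ := mul_one _)
    rw [Real.norm_eq_abs, abs_le]
    constructor <;> [linarith; linarith]
  have hsplit : A x = (c : ℂ) • x + T x := by
    simp [hT, ContinuousLinearMap.sub_apply, Algebra.algebraMap_eq_smul_one]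
  calc ‖⟪A x, y⟫_ℂ‖ = ‖⟪(c : ℂ) • x, y⟫_ℂ + ⟪T x, y⟫_ℂ‖ := by rw [hsplit, inner_add_left]
    _ ≤ ‖⟪(c : ℂ) • x, y⟫_ℂ‖ + ‖⟪T x, y⟫_ℂ‖ := norm_add_le _ _
    _ ≤ c * ‖⟪x, y⟫_ℂ‖ + ‖T x‖ * ‖y‖ := by
        gcongr
        · rw [inner_smul_left]
          simp [Complex.norm_real, abs_of_nonneg hc0, norm_mul]
        · exact norm_inner_le_norm _ _
    _ ≤ c * ‖⟪x, y⟫_ℂ‖ + (c * ‖x‖) * ‖y‖ := by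
        gcongr
        exact (T.le_opNorm x).trans (by gcongr)
    _ = (‖A‖ / 2) * (‖⟪x, y⟫_ℂ‖ + ‖x‖ * ‖y‖) := by rw [← hc]; ring
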